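/- Let F be a one-sided CA over a finite alphabet A of radius r with r ≥ 1. Then for every n ≥ 1 the subword complexities of the trace subshifts satisfy p_n(τ_{r+1}(F)) = |A| · p_n(τ_r(F)). -/
import Mathlib


/-- The one-sided shift map `σ(c)(i) = c(i+1)`. -/
def shift {A : Type*} (c : ℕ → A) : ℕ → A := fun i => c (i + 1)

/-- The `m`-th trace subshift of `F`: the set of sequences of width-`m` windows
`i ↦ (F^i(c)(0), …, F^i(c)(m-1))` read off orbits of `F`. -/
def traceSubshift {A : Type*} (F : (ℕ → A) → ℕ → A) (m : ℕ) : Set (ℕ → (Fin m → A)) :=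
  { t | ∃ c : ℕ → A, ∀ (i : ℕ) (k : Fin m), t i k = F^[i] c (k : ℕ) }

/-- The set of length-`n` prefixes of elements of `X ⊆ Bᴺ`; its cardinality is the subword
complexity `p_n(X)`. -/
def prefixSet {B : Type*} (X : Set (ℕ → B)) (n : ℕ) : Set (Fin n → B) :=
  { u | ∃ t ∈ X, ∀ i : Fin n, u i = t (i : ℕ) }

/-- Prepend a letter to a one-sided configuration. -/
def ncons {A : Type} (a : A) (d : ℕ → A) : ℕ → A
  | 0 => a
  | k + 1 => d k

/-- The sequence of cell-0 values of `F^i (ncons a d)`. -/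
def bIter {A : Type} {r : ℕ} (f : (Fin (r + 1) → A) → A) (F : (ℕ → A) → ℕ → A)
    (a : A) (d : ℕ → A) : ℕ → A
  | 0 => a
  | i + 1 => f (Fin.cons (bIter f F a d i) (fun k : Fin r => F^[i] d (k : ℕ)))

lemma ncons_head_shift {A : Type} (c : ℕ → A) : ncons (c 0) (shift c) = c := by
  funext k
  cases k with
  | zero => rfl
  | succ k => rfl

lemma iterate_ncons {A : Type} {r : ℕ} {f : (Fin (r + 1) → A) → A} {F : (ℕ → A) → ℕ → A}
    (hF : ∀ c i, F c i = f fun k => c (i + (k : ℕ))) (a : A) (d : ℕ → A) :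
    ∀ i, F^[i] (ncons a d) = ncons (bIter f F a d i) (F^[i] d)
  | 0 => rfl
  | (i + 1) => by
    rw [Function.iterate_succ_apply', iterate_ncons hF a d i]
    funext k
    cases k with
    | zero =>
      show F _ 0 = ncons (bIter f F a d (i + 1)) _ 0
      rw [hF]
      show _ = bIter f F a d (i + 1)
      show _ = f (Fin.cons (bIter f F a d i) (fun k : Fin r => F^[i] d (k : ℕ)))
      congr 1
      funext j
      induction j using Fin.cases with
      | zero => simp [ncons]
      | succ j => simp [ncons, Fin.val_succ]
    | succ k =>
      show F _ (k + 1) = ncons _ (F^[i+1] d) (k + 1)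
      rw [Function.iterate_succ_apply']
      show _ = F (F^[i] d) k
      rw [hF, hF]
      congr 1
      funext j
      show ncons _ (F^[i] d) (k + 1 + (j : ℕ)) = F^[i] d (k + (j : ℕ))
      have h : k + 1 + (j : ℕ) = (k + (j : ℕ)) + 1 := by omega
      rw [h]
      rfl

lemma bIter_congr {A : Type} {r : ℕ} {f : (Fin (r + 1) → A) → A} {F : (ℕ → A) → ℕ → A}
    (a : A) {d d' : ℕ → A} :
    ∀ i, (∀ j, j < i → ∀ k : ℕ, k < r → F^[j] d k = F^[j] d' k) →
      bIter f F a d i = bIter f F a d' i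
  | 0, _ => rfl
  | (i + 1), h => by
    show f _ = f _
    congr 1
    funext j
    induction j using Fin.cases with
    | zero =>
      simp only [Fin.cons_zero]
      exact bIter_congr a i (fun j hj => h j (by omega))
    | succ j =>
      simp only [Fin.cons_succ]
      exact h i (by omega) j j.isLt

lemma shift_comm {A : Type} {r : ℕ} {f : (Fin (r + 1) → A) → A} {F : (ℕ → A) → ℕ → A}
    (hF : ∀ c i, F c i = f fun k => c (i + (k : ℕ))) (c : ℕ → A) :
    F (shift c) = shift (F c) := by
  funext m
  show F (shift c) m = F c (m + 1)
  rw [hF, hF]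
  congr 1
  funext j
  show c (m + (j : ℕ) + 1) = c (m + 1 + (j : ℕ))
  congr 1
  omega

lemma iterate_shift {A : Type} {r : ℕ} {f : (Fin (r + 1) → A) → A} {F : (ℕ → A) → ℕ → A}
    (hF : ∀ c i, F c i = f fun k => c (i + (k : ℕ))) :
    ∀ (i : ℕ) (c : ℕ → A), F^[i] (shift c) = shift (F^[i] c)
  | 0, _ => rfl
  | (i + 1), c => by
    rw [Function.iterate_succ_apply, shift_comm hF, iterate_shift hF i (F c),
      Function.iterate_succ_apply]

/-- For a one-sided CA `F` of radius `r ≥ 1` over a finite alphabet `A`, the subword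
complexities of consecutive trace subshifts satisfy
`p_n(τ_{r+1}(F)) = |A| · p_n(τ_r(F))` for every `n ≥ 1`. -/
theorem subword_complexity_of_trace_succ
    {A : Type} [Fintype A] [Nonempty A]
    {r : ℕ} (hr : 1 ≤ r)
    (f : (Fin (r + 1) → A) → A) (F : (ℕ → A) → ℕ → A)
    (hF : ∀ c i, F c i = f fun k => c (i + (k : ℕ)))
    (n : ℕ) (hn : 1 ≤ n) :
    Nat.card (prefixSet (traceSubshift F (r + 1)) n) =
      Fintype.card A * Nat.card (prefixSet (traceSubshift F r) n) := by
  classical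
  have hn0 : 0 < n := hn
  -- the restriction to columns 1..r is a width-r prefix
  have h1 : ∀ u : prefixSet (traceSubshift F (r + 1)) n,
      (fun (i : Fin n) (k : Fin r) => u.1 i k.succ) ∈ prefixSet (traceSubshift F r) n := by
    rintro ⟨u, t, ⟨c, hc⟩, hut⟩
    refine ⟨fun i k => F^[i] (shift c) (k : ℕ), ⟨shift c, fun _ _ => rfl⟩, ?_⟩
    intro i
    funext k
    show u i k.succ = F^[(i:ℕ)] (shift c) (k : ℕ)
    rw [hut i, hc i k.succ, iterate_shift hF]
    rfl
  let Ψ : prefixSet (traceSubshift F (r + 1)) n →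
      A × prefixSet (traceSubshift F r) n :=
    fun u => (u.1 ⟨0, hn0⟩ 0, ⟨fun i k => u.1 i k.succ, h1 u⟩)
  have hinj : Function.Injective Ψ := by
    rintro ⟨u, hu⟩ ⟨u', hu'⟩ h
    obtain ⟨t, ⟨c, hc⟩, hut⟩ := hu
    obtain ⟨t', ⟨c', hc'⟩, hut'⟩ := hu'
    have hval : ∀ (i : Fin n) (k : Fin (r + 1)), u i k = F^[(i:ℕ)] c (k : ℕ) := by
      intro i k; rw [hut i, hc i k]
    have hval' : ∀ (i : Fin n) (k : Fin (r + 1)), u' i k = F^[(i:ℕ)] c' (k : ℕ) := by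
      intro i k; rw [hut' i, hc' i k]
    have ha : u ⟨0, hn0⟩ 0 = u' ⟨0, hn0⟩ 0 := congrArg Prod.fst h
    have hrest : ∀ (i : Fin n) (k : Fin r), u i k.succ = u' i k.succ := by
      intro i k
      have := congrArg (fun p => (p.2 : Fin n → Fin r → A) i k) h
      exact this
    -- agreement of shifted iterates
    have hagree : ∀ j, j < n → ∀ k : ℕ, k < r →
        F^[j] (shift c) k = F^[j] (shift c') k := by
      intro j hj k hk
      have := hrest ⟨j, hj⟩ ⟨k, hk⟩
      rw [hval, hval'] at this
      rw [iterate_shift hF, iterate_shift hF]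
      show F^[j] c (k + 1) = F^[j] c' (k + 1)
      simpa [Fin.val_succ] using this
    have ha0 : c 0 = c' 0 := by
      have h0 := ha
      rw [hval, hval'] at h0
      simpa using h0
    refine Subtype.ext ?_
    funext i k
    induction k using Fin.cases with
    | zero =>
      show u i 0 = u' i 0
      rw [hval i 0, hval' i 0]
      show F^[(i:ℕ)] c 0 = F^[(i:ℕ)] c' 0
      conv_lhs => rw [← ncons_head_shift c]
      conv_rhs => rw [← ncons_head_shift c']
      rw [iterate_ncons hF, iterate_ncons hF]
      show bIter f F (c 0) (shift c) (i : ℕ) = bIter f F (c' 0) (shift c') (i : ℕ)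
      rw [ha0]
      exact bIter_congr _ _ (fun j hj k hk => hagree j (lt_trans hj i.isLt) k hk)
    | succ k =>
      show u i k.succ = u' i k.succ
      exact hrest i k
  have hsurj : Function.Surjective Ψ := by
    rintro ⟨a, ⟨v, hv⟩⟩
    obtain ⟨t, ⟨d, hd⟩, hvt⟩ := hv
    refine ⟨⟨fun i k => F^[(i:ℕ)] (ncons a d) (k : ℕ),
      fun i k => F^[i] (ncons a d) (k : ℕ), ⟨ncons a d, fun _ _ => rfl⟩, fun _ => rfl⟩, ?_⟩
    refine Prod.ext rfl (Subtype.ext ?_)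
    funext i k
    show F^[(i:ℕ)] (ncons a d) ((k.succ : Fin (r+1)) : ℕ) = v i k
    rw [iterate_ncons hF]
    show ncons _ (F^[(i:ℕ)] d) ((k : ℕ) + 1) = v i k
    show F^[(i:ℕ)] d (k : ℕ) = v i k
    rw [hvt i, hd i k]
  rw [Nat.card_congr (Equiv.ofBijective Ψ ⟨hinj, hsurj⟩), Nat.card_prod,
    Nat.card_eq_fintype_card]
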